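/- Let F : ℝ^M × Ω → ℝ with θ ↦ F(θ, H) mean-square L-Lipschitz, U ∼ N(0, I_M) independent of H, and μ > 0. Then for every θ, E[ ‖((F(θ + μU, H) − F(θ, H))/μ)·U‖₂² ] ≤ L²·E[‖U‖₂⁴] ≤ L²(M+4)². -/

import Mathlib

open MeasureTheory ProbabilityTheory Real
open scoped ENNReal NNReal

/-- The standard Gaussian measure `N(0, I_M)` on `ℝ^M`. -/
noncomputable def stdGaussian (M : ℕ) : Measure (EuclideanSpace ℝ (Fin M)) :=
  (Measure.pi fun _ : Fin M => gaussianReal 0 1).map (WithLp.toLp 2)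

lemma integrable_pow_mul_gauss (n : ℕ) {b : ℝ} (hb : 0 < b) :
    Integrable fun x : ℝ => x ^ n * exp (-b * x ^ 2) := by
  have := integrable_rpow_mul_exp_neg_mul_sq hb (s := (n : ℝ))
    (lt_of_lt_of_le neg_one_lt_zero (Nat.cast_nonneg n))
  simpa [Real.rpow_natCast] using this

lemma integral_pow_mul_gauss_even (n : ℕ) {b : ℝ} (hb : 0 < b) :
    ∫ x : ℝ, x ^ (2 * n) * exp (-b * x ^ 2) =
      b ^ (-(2 * (n : ℝ) + 1) / 2) * Real.Gamma ((2 * (n : ℝ) + 1) / 2) := by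
  have h1 : (∫ x : ℝ, x ^ (2 * n) * exp (-b * x ^ 2))
      = 2 * ∫ x in Set.Ioi (0 : ℝ), x ^ (2 * n) * exp (-b * x ^ 2) := by
    rw [← integral_comp_abs (f := fun x => x ^ (2 * n) * exp (-b * x ^ 2))]
    congr 1; funext x
    rw [pow_mul, pow_mul, sq_abs]
  rw [h1]
  have h2 : (∫ x in Set.Ioi (0 : ℝ), x ^ (2 * n) * exp (-b * x ^ 2))
      = ∫ x in Set.Ioi (0 : ℝ), x ^ ((2 * n : ℕ) : ℝ) * exp (-b * x ^ ((2:ℕ) : ℝ)) := by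
    refine setIntegral_congr_fun measurableSet_Ioi (fun x hx => ?_)
    rw [Real.rpow_natCast, Real.rpow_natCast]
  rw [h2, Nat.cast_ofNat,
    integral_rpow_mul_exp_neg_mul_rpow two_pos
      (lt_of_lt_of_le neg_one_lt_zero (by positivity) : (-1:ℝ) < ((2*n : ℕ):ℝ)) hb]
  push_cast
  ring

lemma gaussianReal_std_eq : gaussianReal 0 1 =
    MeasureTheory.volume.withDensity
      (fun x => ((gaussianPDFReal 0 1 x).toNNReal : ℝ≥0∞)) := by
  rw [gaussianReal_of_var_ne_zero 0 one_ne_zero]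
  congr 1

lemma integral_gaussianReal_std (g : ℝ → ℝ) :
    ∫ x, g x ∂(gaussianReal 0 1) = ∫ x, gaussianPDFReal 0 1 x * g x := by
  rw [gaussianReal_std_eq,
    integral_withDensity_eq_integral_smul
      (measurable_gaussianPDFReal 0 1).real_toNNReal g]
  congr 1; funext x
  rw [NNReal.smul_def, smul_eq_mul, Real.coe_toNNReal _ (gaussianPDFReal_nonneg 0 1 x)]

lemma integrable_pow_gaussianReal_std (n : ℕ) :
    Integrable (fun x : ℝ => x ^ n) (gaussianReal 0 1) := by
  rw [gaussianReal_std_eq,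
    integrable_withDensity_iff_integrable_smul
      (measurable_gaussianPDFReal 0 1).real_toNNReal]
  have : Integrable (fun x : ℝ => gaussianPDFReal 0 1 x * x ^ n) := by
    have h := (integrable_pow_mul_gauss n (b := (1:ℝ)/2) (by norm_num)).const_mul ((√(2 * π))⁻¹)
    apply h.congr
    filter_upwards with x
    rw [gaussianPDFReal]
    push_cast
    rw [mul_one, sub_zero]
    ring_nf
  apply this.congr
  filter_upwards with x
  rw [NNReal.smul_def, smul_eq_mul, Real.coe_toNNReal _ (gaussianPDFReal_nonneg 0 1 x)]


lemma integral_pow_gaussianReal_std (n : ℕ) :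
    ∫ x, x ^ (2 * n) ∂(gaussianReal 0 1) =
      (√(2 * π))⁻¹ * (((1:ℝ)/2) ^ (-(2 * (n : ℝ) + 1) / 2) * Real.Gamma ((2 * (n : ℝ) + 1) / 2)) := by
  rw [integral_gaussianReal_std]
  have : (fun x : ℝ => gaussianPDFReal 0 1 x * x ^ (2*n))
      = fun x : ℝ => (√(2 * π))⁻¹ * (x ^ (2*n) * exp (-(1/2) * x ^ 2)) := by
    funext x
    rw [gaussianPDFReal]
    push_cast
    rw [mul_one, sub_zero]
    ring_nf
  rw [this, integral_const_mul, integral_pow_mul_gauss_even n (by norm_num)]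

lemma rpow_half_inv_eq (k : ℕ) :
    ((1:ℝ)/2) ^ (-((2:ℝ) * k + 1) / 2) = 2 ^ (k:ℝ) * √2 := by
  rw [one_div, show -((2:ℝ) * k + 1) / 2 = -(((2:ℝ) * k + 1) / 2) by ring,
    Real.inv_rpow (by norm_num : (0:ℝ) ≤ 2), ← Real.rpow_neg (by norm_num : (0:ℝ) ≤ 2), neg_neg,
    show ((2:ℝ) * k + 1) / 2 = (k:ℝ) + 1/2 by ring, Real.rpow_add two_pos,
    ← Real.sqrt_eq_rpow]

lemma integral_sq_gaussianReal : ∫ x, x ^ 2 ∂(gaussianReal 0 1) = 1 := by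
  have h := integral_pow_gaussianReal_std 1
  have h2 := rpow_half_inv_eq 1
  norm_num at h h2
  rw [h, h2]
  have hg : Real.Gamma (3/2) = (1/2) * √π := by
    rw [show (3:ℝ)/2 = 1/2 + 1 by norm_num, Real.Gamma_add_one (by norm_num),
      Real.Gamma_one_half_eq]
  rw [hg]
  have s2 : √2 * √2 = 2 := Real.mul_self_sqrt (by norm_num)
  have sp : √π * √π = π := Real.mul_self_sqrt (le_of_lt Real.pi_pos)
  have h2p : (0:ℝ) < √2 := Real.sqrt_pos.mpr (by norm_num)
  have hpp : (0:ℝ) < √π := Real.sqrt_pos.mpr Real.pi_pos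
  field_simp

lemma integral_pow4_gaussianReal : ∫ x, x ^ 4 ∂(gaussianReal 0 1) = 3 := by
  have h := integral_pow_gaussianReal_std 2
  have h2 := rpow_half_inv_eq 2
  norm_num at h h2
  rw [h, h2]
  have hg : Real.Gamma (5/2) = (3/4) * √π := by
    rw [show (5:ℝ)/2 = 3/2 + 1 by norm_num, Real.Gamma_add_one (by norm_num),
      show (3:ℝ)/2 = 1/2 + 1 by norm_num, Real.Gamma_add_one (by norm_num),
      Real.Gamma_one_half_eq]
    ring
  rw [hg]
  have s2 : √2 * √2 = 2 := Real.mul_self_sqrt (by norm_num)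
  have sp : √π * √π = π := Real.mul_self_sqrt (le_of_lt Real.pi_pos)
  have h2p : (0:ℝ) < √2 := Real.sqrt_pos.mpr (by norm_num)
  have hpp : (0:ℝ) < √π := Real.sqrt_pos.mpr Real.pi_pos
  field_simp

noncomputable def gMS : MeasureSpace ℝ := ⟨gaussianReal 0 1⟩


instance (M : ℕ) : IsProbabilityMeasure (stdGaussian M) :=
  by unfold _root_.stdGaussian; exact Measure.isProbabilityMeasure_map (WithLp.measurable_toLp _ _).aemeasurable

lemma prod_expand {M : ℕ} (i j : Fin M) (u : EuclideanSpace ℝ (Fin M)) :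
    (∏ k, (u k) ^ ((if k = i then 2 else 0) + (if k = j then 2 else 0)))
      = (u i) ^ 2 * (u j) ^ 2 := by
  simp_rw [pow_add]
  rw [Finset.prod_mul_distrib]
  congr 1 <;> simp [apply_ite (fun n => (u _) ^ n)]

lemma integrable_coord_prod {M : ℕ} (i j : Fin M) :
    Integrable (fun u : EuclideanSpace ℝ (Fin M) => (u i) ^ 2 * (u j) ^ 2) (stdGaussian M) := by
  have key := MeasureTheory.Integrable.fin_nat_prod (μ := fun _ : Fin M => gaussianReal 0 1)
    (f := fun k (x : ℝ) => x ^ ((if k = i then 2 else 0) + (if k = j then 2 else 0)))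
    (fun k => integrable_pow_gaussianReal_std _)
  have key' : Integrable
      (fun u : EuclideanSpace ℝ (Fin M) =>
        ∏ k, (u k) ^ ((if k = i then 2 else 0) + (if k = j then 2 else 0))) (stdGaussian M) := by
    rw [_root_.stdGaussian, ← MeasurableEquiv.coe_toLp, integrable_map_equiv]; exact key
  exact key'.congr (Filter.Eventually.of_forall fun u => prod_expand i j u)

lemma integral_coord_prod {M : ℕ} (i j : Fin M) :
    ∫ u : EuclideanSpace ℝ (Fin M), (u i) ^ 2 * (u j) ^ 2 ∂(stdGaussian M)
      = if i = j then 3 else 1 := by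
  have key := MeasureTheory.integral_fin_nat_prod_eq_prod (μ := fun _ : Fin M => gaussianReal 0 1)
    (fun k (x : ℝ) => x ^ ((if k = i then 2 else 0) + (if k = j then 2 else 0)))
  have key' : (∫ u : EuclideanSpace ℝ (Fin M),
        ∏ k, (u k) ^ ((if k = i then 2 else 0) + (if k = j then 2 else 0)) ∂(stdGaussian M))
      = ∏ k, ∫ x : ℝ, x ^ ((if k = i then 2 else 0) + (if k = j then 2 else 0))
          ∂(gaussianReal 0 1) := by
      rw [_root_.stdGaussian, ← MeasurableEquiv.coe_toLp, integral_map_equiv]; exact key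
  rw [integral_congr_ae (Filter.Eventually.of_forall fun u => (prod_expand i j u).symm), key']
  by_cases hij : i = j
  · subst hij
    simp only [if_pos rfl]
    rw [Finset.prod_eq_single i]
    · simp [integral_pow4_gaussianReal]
    · intro k _ hk
      simp [hk, (measure_univ : (gaussianReal 0 1) Set.univ = 1)]
    · simp
  · rw [if_neg hij]
    have : ∀ k : Fin M, (∫ x : ℝ, x ^ ((if k = i then 2 else 0) + (if k = j then 2 else 0))
        ∂(gaussianReal 0 1)) = 1 := by
      intro k
      by_cases hki : k = i
      · subst hki
        simp [hij, integral_sq_gaussianReal]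
      · by_cases hkj : k = j
        · subst hkj
          simp [hki, integral_sq_gaussianReal]
        · simp [hki, hkj, (measure_univ : (gaussianReal 0 1) Set.univ = 1)]
    simp [this]

lemma norm_pow4 {M : ℕ} (u : EuclideanSpace ℝ (Fin M)) :
    ‖u‖ ^ 4 = ∑ i, ∑ j, (u i) ^ 2 * (u j) ^ 2 := by
  have h2 : ‖u‖ ^ 2 = ∑ i, (u i) ^ 2 := by
    rw [EuclideanSpace.norm_eq, Real.sq_sqrt (by positivity)]
    simp [sq_abs]
  calc ‖u‖ ^ 4 = (‖u‖ ^ 2) * (‖u‖ ^ 2) := by ring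
  _ = _ := by rw [h2, Finset.sum_mul_sum]

lemma integrable_norm_pow4 (M : ℕ) :
    Integrable (fun u : EuclideanSpace ℝ (Fin M) => ‖u‖ ^ 4) (stdGaussian M) := by
  have : Integrable (fun u : EuclideanSpace ℝ (Fin M) => ∑ i, ∑ j, (u i) ^ 2 * (u j) ^ 2)
      (stdGaussian M) :=
    integrable_finset_sum _ fun i _ => integrable_finset_sum _ fun j _ => integrable_coord_prod i j
  exact this.congr (Filter.Eventually.of_forall fun u => (norm_pow4 u).symm)

lemma integral_norm_pow4 (M : ℕ) :
    ∫ u, ‖u‖ ^ 4 ∂(stdGaussian M) = (M : ℝ) ^ 2 + 2 * M := by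
  rw [integral_congr_ae (Filter.Eventually.of_forall fun u => norm_pow4 u)]
  rw [integral_finset_sum _ fun i _ => integrable_finset_sum _ fun j _ => integrable_coord_prod i j]
  simp_rw [integral_finset_sum _ fun j _ => integrable_coord_prod _ j, integral_coord_prod]
  have hinner : ∀ i : Fin M, (∑ j : Fin M, if i = j then (3:ℝ) else 1) = 2 + M := by
    intro i
    have : ∀ j : Fin M, (if i = j then (3:ℝ) else 1) = (if i = j then (2:ℝ) else 0) + 1 := by
      intro j; split <;> norm_num
    simp_rw [this, Finset.sum_add_distrib, Finset.sum_ite_eq Finset.univ i (fun _ => (2:ℝ))]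
    simp
  simp_rw [hinner]
  simp
  ring

/-- Second moment bound for the stochastic zeroth-order gradient estimator of a
mean-square Lipschitz expectation:
`E‖((F(θ+μU,H) − F(θ,H))/μ) U‖² ≤ L² E‖U‖⁴ ≤ L²(M+4)²`. -/
theorem stochastic_finite_difference_second_moment
    {Ω : Type*} [MeasurableSpace Ω] (P : Measure Ω) [IsProbabilityMeasure P]
    {α : Type*} [MeasurableSpace α] (H : Ω → α) (hH : Measurable H)
    (M : ℕ) (U : Ω → EuclideanSpace ℝ (Fin M)) (hU : Measurable U)
    (hUlaw : Measure.map U P = stdGaussian M)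
    (hindep : IndepFun U H P)
    (F : EuclideanSpace ℝ (Fin M) → α → ℝ) (L : ℝ)
    (hFmeas : Measurable (Function.uncurry F))
    (hlip : ∀ θ₁ θ₂ : EuclideanSpace ℝ (Fin M),
      (∫ ω, (F θ₁ (H ω) - F θ₂ (H ω)) ^ 2 ∂P) ≤ (L * ‖θ₁ - θ₂‖) ^ 2)
    (μ : ℝ) (hμ : 0 < μ) (θ : EuclideanSpace ℝ (Fin M)) :
    (∫ ω, ‖((F (θ + μ • U ω) (H ω) - F θ (H ω)) / μ) • U ω‖ ^ 2 ∂P) ≤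
        L ^ 2 * ∫ u, ‖u‖ ^ 4 ∂(stdGaussian M) ∧
      (∫ ω, ‖((F (θ + μ • U ω) (H ω) - F θ (H ω)) / μ) • U ω‖ ^ 2 ∂P) ≤
        L ^ 2 * ((M : ℝ) + 4) ^ 2 := by
  set ν : Measure α := Measure.map H P with hν
  have hνprob : IsProbabilityMeasure ν := Measure.isProbabilityMeasure_map hH.aemeasurable
  have hprod : Measure.map (fun ω => (U ω, H ω)) P = (stdGaussian M).prod ν := by
    rw [← hUlaw]
    exact (indepFun_iff_map_prod_eq_prod_map_map hU.aemeasurable hH.aemeasurable).mp hindep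
  set φ : EuclideanSpace ℝ (Fin M) × α → ℝ :=
    fun p => ((F (θ + μ • p.1) p.2 - F θ p.2) / μ) ^ 2 * ‖p.1‖ ^ 2 with hφ
  have hφm : Measurable φ := by
    have h1 : Measurable fun p : EuclideanSpace ℝ (Fin M) × α => F (θ + μ • p.1) p.2 :=
      hFmeas.comp (((measurable_fst.const_smul μ).const_add θ).prodMk measurable_snd)
    have h2 : Measurable fun p : EuclideanSpace ℝ (Fin M) × α => F θ p.2 :=
      hFmeas.comp (measurable_const.prodMk measurable_snd)
    exact (((h1.sub h2).div_const μ).pow_const 2).mul (measurable_fst.norm.pow_const 2)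
  have hφnn : ∀ p, 0 ≤ φ p := fun p => by positivity
  have hpt : ∀ ω, ‖((F (θ + μ • U ω) (H ω) - F θ (H ω)) / μ) • U ω‖ ^ 2 = φ (U ω, H ω) := by
    intro ω
    rw [norm_smul, mul_pow, Real.norm_eq_abs, sq_abs]
  have goal_eq : (∫ ω, ‖((F (θ + μ • U ω) (H ω) - F θ (H ω)) / μ) • U ω‖ ^ 2 ∂P)
      = ∫ ω, φ (U ω, H ω) ∂P := integral_congr_ae (Filter.Eventually.of_forall hpt)
  -- inner lintegral
  set inr : EuclideanSpace ℝ (Fin M) → ℝ≥0∞ :=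
    fun u => ∫⁻ h, ENNReal.ofReal ((F (θ + μ • u) h - F θ h) ^ 2) ∂ν with hinr
  have hgm : ∀ u : EuclideanSpace ℝ (Fin M),
      Measurable fun h => (F (θ + μ • u) h - F θ h) ^ 2 := fun u =>
    (((hFmeas.comp (measurable_const.prodMk measurable_id)).sub
      (hFmeas.comp (measurable_const.prodMk measurable_id))).pow_const 2)
  have hsplit : ∀ u : EuclideanSpace ℝ (Fin M),
      (∫⁻ h, ENNReal.ofReal (φ (u, h)) ∂ν) = inr u * ENNReal.ofReal (‖u‖ ^ 2 / μ ^ 2) := by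
    intro u
    have heq : ∀ h : α, ENNReal.ofReal (φ (u, h))
        = ENNReal.ofReal ((F (θ + μ • u) h - F θ h) ^ 2) * ENNReal.ofReal (‖u‖ ^ 2 / μ ^ 2) := by
      intro h
      rw [← ENNReal.ofReal_mul (by positivity)]
      congr 1
      rw [hφ]
      field_simp
    simp_rw [heq]
    rw [lintegral_mul_const _ ((hgm u).ennreal_ofReal)]
  have hinner_bound : ∀ u : EuclideanSpace ℝ (Fin M), inr u ≠ ⊤ →
      inr u ≤ ENNReal.ofReal (L ^ 2 * μ ^ 2 * ‖u‖ ^ 2) := by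
    intro u hfin
    have hcomp : inr u = ∫⁻ ω, ENNReal.ofReal ((F (θ + μ • u) (H ω) - F θ (H ω)) ^ 2) ∂P :=
      lintegral_map ((hgm u).ennreal_ofReal) hH
    set g : Ω → ℝ := fun ω => (F (θ + μ • u) (H ω) - F θ (H ω)) ^ 2 with hg
    have hgint : Integrable g P := by
      refine ⟨((hgm u).comp hH).aestronglyMeasurable, ?_⟩
      rw [hasFiniteIntegral_iff_ofReal (Filter.Eventually.of_forall fun ω => by positivity)]
      rw [hcomp] at hfin
      exact lt_top_iff_ne_top.mpr hfin
    have hnorm : ‖θ + μ • u - θ‖ = μ * ‖u‖ := by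
      rw [add_sub_cancel_left, norm_smul, Real.norm_eq_abs, abs_of_pos hμ]
    have hb : (∫ ω, g ω ∂P) ≤ L ^ 2 * μ ^ 2 * ‖u‖ ^ 2 := by
      calc (∫ ω, g ω ∂P) ≤ (L * ‖θ + μ • u - θ‖) ^ 2 := hlip (θ + μ • u) θ
      _ = L ^ 2 * μ ^ 2 * ‖u‖ ^ 2 := by rw [hnorm]; ring
    calc inr u = ENNReal.ofReal (∫ ω, g ω ∂P) := by
          rw [hcomp, ← ofReal_integral_eq_lintegral_ofReal hgint
            (Filter.Eventually.of_forall fun ω => by positivity)]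
    _ ≤ _ := ENNReal.ofReal_le_ofReal hb
  -- the full lintegral
  set I : ℝ≥0∞ := ∫⁻ ω, ENNReal.ofReal (φ (U ω, H ω)) ∂P with hIdef
  have hmeasUH : Measurable fun ω => (U ω, H ω) := hU.prodMk hH
  have hIint : (∫ ω, φ (U ω, H ω) ∂P) = I.toReal := by
    rw [integral_eq_lintegral_of_nonneg_ae (Filter.Eventually.of_forall fun ω => hφnn _)
      ((hφm.comp hmeasUH).aestronglyMeasurable)]
  have hI2 : I = ∫⁻ p, ENNReal.ofReal (φ p) ∂((stdGaussian M).prod ν) := by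
    rw [hIdef, ← lintegral_map hφm.ennreal_ofReal hmeasUH, hprod]
  have hfub : (∫⁻ p, ENNReal.ofReal (φ p) ∂((stdGaussian M).prod ν))
      = ∫⁻ u, ∫⁻ h, ENNReal.ofReal (φ (u, h)) ∂ν ∂(stdGaussian M) :=
    lintegral_prod _ hφm.ennreal_ofReal.aemeasurable
  have hRHS0 : (0:ℝ) ≤ L ^ 2 * ∫ u, ‖u‖ ^ 4 ∂(stdGaussian M) :=
    mul_nonneg (sq_nonneg L) (integral_nonneg fun u => by positivity)
  have main : (∫ ω, φ (U ω, H ω) ∂P) ≤ L ^ 2 * ∫ u, ‖u‖ ^ 4 ∂(stdGaussian M) := by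
    by_cases hItop : I = ⊤
    · rw [hIint, hItop, ENNReal.toReal_top]
      exact hRHS0
    · have hae : ∀ᵐ u ∂(stdGaussian M), (∫⁻ h, ENNReal.ofReal (φ (u, h)) ∂ν) < ⊤ := by
        refine ae_lt_top (Measurable.lintegral_prod_right' hφm.ennreal_ofReal) ?_
        rw [← hfub, ← hI2]
        exact hItop
      have hbd : ∀ᵐ u ∂(stdGaussian M),
          (∫⁻ h, ENNReal.ofReal (φ (u, h)) ∂ν) ≤ ENNReal.ofReal (L ^ 2 * ‖u‖ ^ 4) := by
        filter_upwards [hae] with u hu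
        rw [hsplit u] at hu ⊢
        by_cases hz : ENNReal.ofReal (‖u‖ ^ 2 / μ ^ 2) = 0
        · rw [hz, mul_zero]; exact zero_le
        · have hfin : inr u ≠ ⊤ := by
            intro htop
            rw [htop, ENNReal.top_mul hz] at hu
            exact absurd hu (lt_irrefl _)
          calc inr u * ENNReal.ofReal (‖u‖ ^ 2 / μ ^ 2)
              ≤ ENNReal.ofReal (L ^ 2 * μ ^ 2 * ‖u‖ ^ 2) * ENNReal.ofReal (‖u‖ ^ 2 / μ ^ 2) :=
                mul_le_mul_left (hinner_bound u hfin) _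
          _ = ENNReal.ofReal (L ^ 2 * ‖u‖ ^ 4) := by
                rw [← ENNReal.ofReal_mul (by positivity)]
                congr 1
                field_simp
      have hle : I ≤ ∫⁻ u, ENNReal.ofReal (L ^ 2 * ‖u‖ ^ 4) ∂(stdGaussian M) := by
        rw [hI2, hfub]
        exact lintegral_mono_ae hbd
      have hR : (∫⁻ u, ENNReal.ofReal (L ^ 2 * ‖u‖ ^ 4) ∂(stdGaussian M))
          = ENNReal.ofReal (L ^ 2 * ∫ u, ‖u‖ ^ 4 ∂(stdGaussian M)) := by
        rw [← ofReal_integral_eq_lintegral_ofReal ((integrable_norm_pow4 M).const_mul (L ^ 2))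
          (Filter.Eventually.of_forall fun u => by positivity), integral_const_mul]
      rw [hIint]
      calc I.toReal ≤ (ENNReal.ofReal (L ^ 2 * ∫ u, ‖u‖ ^ 4 ∂(stdGaussian M))).toReal :=
            ENNReal.toReal_mono ENNReal.ofReal_ne_top (hR ▸ hle)
      _ = _ := ENNReal.toReal_ofReal hRHS0
  constructor
  · rw [goal_eq]; exact main
  · rw [goal_eq]
    refine main.trans ?_
    rw [integral_norm_pow4]
    have hM : (0:ℝ) ≤ (M:ℝ) := Nat.cast_nonneg M
    have : (M:ℝ) ^ 2 + 2 * M ≤ ((M:ℝ) + 4) ^ 2 := by nlinarith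
    exact mul_le_mul_of_nonneg_left this (sq_nonneg L)
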